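/- Let R be a commutative ring, let u, t ∈ R, let λ = (λ_1 > ⋯ > λ_n ≥ 1) be a strict partition of length n, let μ = (μ_1 > ⋯ > μ_{n-1} ≥ 1) be a strict partition of length n−1, and let k be an integer with k > λ_1 and k > μ_1. Define ν = (ν_1,…,ν_n) by ν_1 = k and ν_p = μ_{p−1} for 2 ≤ p ≤ n, and define c : ℤ → R by c_m = 0 for m < 0, c_0 = 1, and c_m = (1+t)·u^m for m ≥ 1. Then det_{1≤p,q≤n}( c_{ν_p − λ_q} ) equals t^{l(λ;μ)} · (1+t)^{s(λ;μ)−r(λ;μ)+1} · u^{k+|μ|−|λ|} if μ interleaves λ, and equals 0 otherwise. (Under u = x^{−1} this is the Γ-case of Theorem 1: the free-fermionic one-row weight ⟨μ| ψ_{k−1/2} e^{φ_−(x;t)} |λ⟩ = t^{l}(1+t)^{s−r+1} x^{|λ|−|μ|−k}.) -/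

import Mathlib

open Finset

lemma my_det_zero_block {R : Type*} [CommRing R] {n : ℕ} (M : Matrix (Fin n) (Fin n) R)
    (P Q : Fin n → Prop) [DecidablePred P] [DecidablePred Q]
    (hz : ∀ p q, P p → Q q → M p q = 0)
    (hc : n < (Finset.univ.filter P).card + (Finset.univ.filter Q).card) :
    M.det = 0 := by
  rw [Matrix.det_apply]
  apply Finset.sum_eq_zero
  intro σ _
  suffices h : ∃ q, M (σ q) q = 0 by
    obtain ⟨q, hq⟩ := h
    rw [Finset.prod_eq_zero (f := fun i => M (σ i) i) (Finset.mem_univ q) hq, smul_zero]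
  by_contra hcon
  push_neg at hcon
  have hsub : (Finset.univ.filter Q).image σ ⊆ Finset.univ.filter (fun p => ¬ P p) := by
    intro p hp
    simp only [Finset.mem_image, Finset.mem_filter, Finset.mem_univ, true_and] at hp ⊢
    obtain ⟨q, hq, rfl⟩ := hp
    intro hP
    exact hcon q (hz _ q hP hq)
  have h1 : (Finset.univ.filter Q).card ≤ (Finset.univ.filter (fun p => ¬ P p)).card := by
    rw [← Finset.card_image_of_injective _ σ.injective]
    exact Finset.card_le_card hsub
  have h2 := Finset.card_filter_add_card_filter_not (s := (Finset.univ : Finset (Fin n))) (p := P)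
  simp only [Finset.card_univ, Fintype.card_fin] at h2
  omega

lemma my_det_tridiag {R : Type*} [CommRing R] {n : ℕ} (N : Matrix (Fin n) (Fin n) R)
    (hfar : ∀ p q : Fin n, (p : ℕ) + 2 ≤ (q : ℕ) ∨ (q : ℕ) + 2 ≤ (p : ℕ) → N p q = 0)
    (hswap : ∀ p q : Fin n, (q : ℕ) = (p : ℕ) + 1 → N p q * N q p = 0) :
    N.det = ∏ p, N p p := by
  rw [Matrix.det_apply]
  rw [Finset.sum_eq_single (1 : Equiv.Perm (Fin n))]
  · simp
  · intro σ _ hσ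
    suffices h : ∏ i, N (σ i) i = 0 by rw [h, smul_zero]
    by_cases hA : ∃ q, ((σ q : ℕ)) + 2 ≤ (q : ℕ) ∨ (q : ℕ) + 2 ≤ ((σ q : ℕ))
    · obtain ⟨q, hq⟩ := hA
      exact Finset.prod_eq_zero (f := fun i => N (σ i) i) (Finset.mem_univ q)
        (hfar _ _ (by omega))
    · push_neg at hA
      -- all displacements ≤ 1
      have hd : ∀ q : Fin n, ((σ q : ℕ)) ≤ (q : ℕ) + 1 ∧ (q : ℕ) ≤ ((σ q : ℕ)) + 1 := by
        intro q; have := hA q; omega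
      have hne : (Finset.univ.filter (fun q : Fin n => σ q ≠ q)).Nonempty := by
        rw [Finset.filter_nonempty_iff]
        by_contra hcon
        push_neg at hcon
        exact hσ (Equiv.ext fun q => by simpa using hcon q (Finset.mem_univ q))
      set q0 := (Finset.univ.filter (fun q : Fin n => σ q ≠ q)).min' hne with hq0
      have hq0mem : σ q0 ≠ q0 := by
        have := Finset.min'_mem _ hne
        rw [← hq0] at this
        simpa using this
      have hmin : ∀ q : Fin n, q < q0 → σ q = q := by
        intro q hq
        by_contra hc2
        have : q0 ≤ q := Finset.min'_le _ _ (by simpa using hc2)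
        exact absurd hq (not_lt.2 this)
      have hstep : ((σ q0 : ℕ)) = (q0 : ℕ) + 1 := by
        rcases lt_trichotomy (σ q0) q0 with h | h | h
        · exact absurd (σ.injective (hmin (σ q0) h)) hq0mem
        · exact absurd h hq0mem
        · have := (hd q0).1
          have hlt : (q0 : ℕ) < (σ q0 : ℕ) := h
          omega
      have hback : σ (σ q0) = q0 := by
        set b := σ.symm q0 with hb
        have hσb : σ b = q0 := σ.apply_symm_apply q0
        have hbne : b ≠ q0 := by
          intro hcon; rw [hcon] at hσb; exact hq0mem hσb
        have hbgt : q0 < b := by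
          rcases lt_trichotomy b q0 with h | h | h
          · exact absurd (hmin b h ▸ hσb : b = q0) hbne
          · exact absurd h hbne
          · exact h
        have hbv : (b : ℕ) = (q0 : ℕ) + 1 := by
          have := (hd b).2
          rw [hσb] at this
          have : (q0:ℕ) < (b:ℕ) := hbgt
          have := (hd b).2
          rw [hσb] at this
          omega
        have : b = σ q0 := Fin.ext (by rw [hbv, hstep])
        rw [← this, hσb]
      -- product contains N (σ q0) q0 and N (σ (σ q0)) (σ q0) = N q0 (σ q0)
      have hne2 : σ q0 ≠ q0 := hq0mem
      have key := hswap q0 (σ q0) hstep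
      calc ∏ i, N (σ i) i
          = N (σ q0) q0 * ∏ i ∈ Finset.univ.erase q0, N (σ i) i := by
            rw [Finset.mul_prod_erase Finset.univ (fun i => N (σ i) i) (Finset.mem_univ q0)]
        _ = N (σ q0) q0 * (N (σ (σ q0)) (σ q0) * ∏ i ∈ (Finset.univ.erase q0).erase (σ q0), N (σ i) i) := by
            rw [Finset.mul_prod_erase (Finset.univ.erase q0) (fun i => N (σ i) i) (Finset.mem_erase.2 ⟨hne2, Finset.mem_univ _⟩)]
        _ = 0 := by rw [hback, ← mul_assoc, mul_comm (N (σ q0) q0) (N q0 (σ q0)), key, zero_mul]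
  · intro h; exact absurd (Finset.mem_univ 1) h

lemma my_card_ge (n a : ℕ) :
    ((Finset.univ : Finset (Fin n)).filter (fun p : Fin n => a ≤ (p : ℕ))).card = n - a := by
  induction n with
  | zero => simp
  | succ n ih =>
    rw [Finset.card_filter] at ih ⊢
    rw [Fin.sum_univ_castSucc]
    simp only [Fin.coe_castSucc, Fin.val_last]
    rw [ih]
    by_cases h : a ≤ n <;> simp [h] <;> omega

lemma my_card_le (n b : ℕ) :
    ((Finset.univ : Finset (Fin n)).filter (fun p : Fin n => (p : ℕ) ≤ b)).card = min (b + 1) n := by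
  induction n with
  | zero => simp
  | succ n ih =>
    rw [Finset.card_filter] at ih ⊢
    rw [Fin.sum_univ_castSucc]
    simp only [Fin.coe_castSucc, Fin.val_last]
    rw [ih]
    by_cases h : n ≤ b <;> simp [h] <;> omega

/-- the Γ-case of Theorem 1 as a determinant.  `lam` is a strict partition
of length `m+1` (all parts ≥ 1), `mu` a strict partition of length `m` padded with a
final `0`, and `k` an integer exceeding both `λ_1` and `μ_1`.  `ν = (k, μ_1, …, μ_{n-1})`
and `c j` is the coefficient of `z^j` in `(1 + t u z)/(1 - u z)`. -/
theorem stmt2 {R : Type*} [CommRing R] (m : ℕ) (u t : R)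
    (lam mu : Fin (m + 1) → ℕ)
    (hlam : StrictAnti lam) (hlam1 : ∀ i, 1 ≤ lam i)
    (hmu : StrictAnti mu) (hmu0 : mu (Fin.last m) = 0)
    (k : ℕ) (hk : lam 0 < k) (hk' : mu 0 < k)
    (c : ℤ → R)
    (hneg : ∀ j : ℤ, j < 0 → c j = 0) (hzero : c 0 = 1)
    (hpos : ∀ j : ℤ, 0 < j → c j = (1 + t) * u ^ j.toNat)
    (ν : Fin (m + 1) → ℕ)
    (hν : ν = Fin.cases k (fun p : Fin m => mu p.castSucc)) :
    (((∀ i : Fin m, mu i.castSucc ≤ lam i.castSucc ∧ lam i.succ ≤ mu i.castSucc) →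
      Matrix.det (Matrix.of fun p q : Fin (m + 1) => c ((ν p : ℤ) - (lam q : ℤ)))
        = t ^ (Finset.univ.filter (fun i : Fin m => mu i.castSucc = lam i.castSucc)).card *
          (1 + t) ^
            ((Finset.univ.filter (fun i : Fin m => mu i.castSucc < lam i.castSucc)).card
              - (Finset.univ.filter (fun i : Fin m => mu i.castSucc = lam i.succ)).card + 1) *
          u ^ ((k + ∑ i, mu i) - (∑ i, lam i))) ∧
    ((¬ ∀ i : Fin m, mu i.castSucc ≤ lam i.castSucc ∧ lam i.succ ≤ mu i.castSucc) →
      Matrix.det (Matrix.of fun p q : Fin (m + 1) => c ((ν p : ℤ) - (lam q : ℤ))) = 0)) := by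
  set M : Matrix (Fin (m+1)) (Fin (m+1)) R :=
    Matrix.of fun p q : Fin (m + 1) => c ((ν p : ℤ) - (lam q : ℤ)) with hM
  have hMval : ∀ p q, M p q = c ((ν p : ℤ) - (lam q : ℤ)) := fun p q => rfl
  have hν0 : ν 0 = k := by simp [hν]
  have hνs : ∀ i : Fin m, ν i.succ = mu i.castSucc := fun i => by rw [hν]; simp
  have hmu1 : ∀ i : Fin m, 1 ≤ mu i.castSucc := by
    intro i
    have := hmu (Fin.castSucc_lt_last i)
    omega
  have hanti : ∀ p q : Fin (m+1), (p : ℕ) < (q : ℕ) → ν q < ν p := by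
    intro p q h
    have hq0 : q ≠ 0 := by
      intro hc; subst hc; simp at h
    obtain ⟨j, rfl⟩ := Fin.eq_succ_of_ne_zero hq0
    rcases Fin.eq_zero_or_eq_succ p with rfl | ⟨i, rfl⟩
    · rw [hν0, hνs]
      calc mu j.castSucc ≤ mu 0 := hmu.antitone (Fin.zero_le _)
        _ < k := hk'
    · rw [hνs, hνs]
      apply hmu
      have : (i : ℕ) < (j : ℕ) := by
        simp only [Fin.val_succ] at h; omega
      exact this
  have hanti_le : ∀ p q : Fin (m+1), (p : ℕ) ≤ (q : ℕ) → ν q ≤ ν p := by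
    intro p q h
    rcases eq_or_lt_of_le h with h' | h'
    · rw [Fin.ext h']
    · exact le_of_lt (hanti p q h')
  have cval : ∀ a b : ℕ, c ((a : ℤ) - b) = if a < b then 0 else if a = b then 1
      else (1+t) * u ^ (a - b) := by
    intro a b
    by_cases h1 : a < b
    · rw [hneg _ (by omega)]; simp [h1]
    · by_cases h2 : a = b
      · subst h2; simp only [sub_self, hzero]; simp [h1]
      · rw [hpos _ (by omega)]
        have h3 : ((a : ℤ) - b).toNat = a - b := by omega
        rw [h3]; simp [h1, h2]
  constructor
  · -- interleaving case
    intro hI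
    have hlow : ∀ p : Fin (m+1), lam p ≤ ν p := by
      intro p
      rcases Fin.eq_zero_or_eq_succ p with rfl | ⟨i, rfl⟩
      · rw [hν0]; exact le_of_lt hk
      · rw [hνs]; exact (hI i).2
    -- row operation matrix
    set F : Matrix (Fin (m+1)) (Fin (m+1)) R :=
      Matrix.of (fun p q : Fin (m+1) =>
        if (p : ℕ) < m ∧ (q : ℕ) = (p : ℕ) + 1 then -(u ^ (ν p - ν q)) else 0) with hF
    have hFval : ∀ p q, F p q =
        if (p : ℕ) < m ∧ (q : ℕ) = (p : ℕ) + 1 then -(u ^ (ν p - ν q)) else 0 :=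
      fun p q => rfl
    set E : Matrix (Fin (m+1)) (Fin (m+1)) R := 1 + F with hE
    have hEtri : E.BlockTriangular id := by
      intro a b hab
      have hab' : b < a := hab
      have h1 : (1 : Matrix (Fin (m+1)) (Fin (m+1)) R) a b = 0 :=
        Matrix.one_apply_ne (Fin.ne_of_gt hab')
      have h2 : F a b = 0 := by
        rw [hFval]
        have : ¬ ((a : ℕ) < m ∧ (b : ℕ) = (a : ℕ) + 1) := by
          rintro ⟨_, h⟩
          have : (b : ℕ) < (a : ℕ) := hab'
          omega
        simp [this]
      rw [hE, Matrix.add_apply, h1, h2, add_zero]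
    have hEdet : E.det = 1 := by
      rw [Matrix.det_of_upperTriangular hEtri]
      apply Finset.prod_eq_one
      intro p _
      have h2 : F p p = 0 := by
        rw [hFval]
        have : ¬ ((p : ℕ) < m ∧ (p : ℕ) = (p : ℕ) + 1) := by omega
        simp [this]
      rw [hE, Matrix.add_apply, h2, add_zero, Matrix.one_apply_eq]
    set N : Matrix (Fin (m+1)) (Fin (m+1)) R := E * M with hN
    have hdetN : N.det = M.det := by
      rw [hN, Matrix.det_mul, hEdet, one_mul]
    have hFM : ∀ (i : Fin m) (q : Fin (m+1)),
        (F * M) i.castSucc q = -(u ^ (ν i.castSucc - ν i.succ)) * M i.succ q := by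
      intro i q
      rw [Matrix.mul_apply]
      have hterm : ∀ r : Fin (m+1), F i.castSucc r * M r q =
          if r = i.succ then -(u ^ (ν i.castSucc - ν r)) * M r q else 0 := by
        intro r
        by_cases hr : r = i.succ
        · subst hr
          rw [hFval, if_pos, if_pos rfl]
          exact ⟨by simp [i.isLt], by simp⟩
        · rw [hFval, if_neg, if_neg hr, zero_mul]
          rintro ⟨_, h2⟩
          exact hr (Fin.ext (by simpa using h2))
      rw [Finset.sum_congr rfl (fun r _ => hterm r), Finset.sum_ite_eq' Finset.univ i.succ
        (fun r => -(u ^ (ν i.castSucc - ν r)) * M r q)]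
      simp
    have hFMlast : ∀ q : Fin (m+1), (F * M) (Fin.last m) q = 0 := by
      intro q
      rw [Matrix.mul_apply]
      apply Finset.sum_eq_zero
      intro r _
      rw [hFval, if_neg, zero_mul]
      rintro ⟨h1, _⟩
      simp at h1
    have hNval : ∀ p q, N p q = M p q + (F * M) p q := by
      intro p q
      rw [hN, hE, Matrix.add_mul, Matrix.one_mul, Matrix.add_apply]
    -- explicit description of the rows of N
    have hNrow : ∀ (i : Fin m) (q : Fin (m+1)), N i.castSucc q =
        if lam q < mu i.castSucc then 0
        else if lam q = mu i.castSucc then t * u ^ (ν i.castSucc - lam q)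
        else if lam q < ν i.castSucc then (1+t) * u ^ (ν i.castSucc - lam q)
        else if lam q = ν i.castSucc then 1 else 0 := by
      intro i q
      rw [hNval, hFM, hMval, hMval, hνs, cval, cval]
      have hba : mu i.castSucc < ν i.castSucc := by
        have := hanti i.castSucc i.succ (by simp)
        rw [hνs] at this; exact this
      set a := ν i.castSucc with ha'
      set b := mu i.castSucc with hb'
      set x := lam q with hx'
      split_ifs
      all_goals (try (exfalso; omega))
      all_goals (try ring1)
      all_goals (try (rw [show a - x = (a - b) + (b - x) by omega, pow_add]; ring1))
      all_goals (try (rw [show a - b = a - x by omega]; ring1))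
    have hNlast : ∀ q : Fin (m+1), N (Fin.last m) q =
        if ν (Fin.last m) < lam q then 0 else if ν (Fin.last m) = lam q then 1
        else (1+t) * u ^ (ν (Fin.last m) - lam q) := by
      intro q
      rw [hNval, hFMlast, add_zero, hMval, cval]
    -- key inequality facts
    have hIweak : ∀ (j : Fin m) (q : Fin (m+1)), (q : ℕ) + 1 < (j.succ : ℕ) →
        ν j.succ < lam q := by
      intro j q hq
      calc ν j.succ = mu j.castSucc := hνs j
        _ ≤ lam j.castSucc := (hI j).1
        _ < lam q := hlam (by
            rw [Fin.lt_def]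
            simp only [Fin.coe_castSucc]
            simp only [Fin.val_succ] at hq
            omega)
    -- hfar
    have hfar : ∀ p q : Fin (m+1), (p : ℕ) + 2 ≤ (q : ℕ) ∨ (q : ℕ) + 2 ≤ (p : ℕ) →
        N p q = 0 := by
      intro p q hpq
      rcases hpq with h | h
      · -- far right : p < m
        have hp : (p : ℕ) < m := by have := q.isLt; omega
        set i : Fin m := ⟨(p : ℕ), hp⟩ with hi
        have hpi : p = i.castSucc := Fin.ext rfl
        rw [hpi, hNrow]
        have : lam q < mu i.castSucc := by
          calc lam q < lam i.succ := hlam (by rw [Fin.lt_def]; simp [hi]; omega)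
            _ ≤ mu i.castSucc := (hI i).2
        rw [if_pos this]
      · -- far left : lam q > ν p
        have hp0 : p ≠ 0 := by
          intro hc; subst hc; simp at h
        obtain ⟨j, rfl⟩ := Fin.eq_succ_of_ne_zero hp0
        have hbig : ν j.succ < lam q := hIweak j q (by omega)
        by_cases hp : ((j.succ : Fin (m+1)) : ℕ) < m
        · set i : Fin m := ⟨(j.succ : ℕ), hp⟩ with hi
          have hpi : (j.succ : Fin (m+1)) = i.castSucc := Fin.ext rfl
          have hb2 : mu i.castSucc < lam q := by
            have h1 : mu i.castSucc < ν i.castSucc := by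
              have := hanti i.castSucc i.succ (by simp)
              rw [hνs] at this; exact this
            have h2 : ν i.castSucc = ν j.succ := by rw [← hpi]
            omega
          rw [hpi, hNrow]
          have hνeq : ν i.castSucc = ν j.succ := by rw [← hpi]
          rw [if_neg (by omega), if_neg (by omega), if_neg (by omega), if_neg (by omega)]
        · have hlast : (j.succ : Fin (m+1)) = Fin.last m := by
            apply Fin.ext; simp only [Fin.val_last]
            have := (j.succ : Fin (m+1)).isLt; omega
          rw [hlast, hNlast, if_pos (by rw [← hlast]; exact hbig)]
    -- hswap
    have hswap : ∀ p q : Fin (m+1), (q : ℕ) = (p : ℕ) + 1 → N p q * N q p = 0 := by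
      intro p q hq1
      have hp : (p : ℕ) < m := by have := q.isLt; omega
      set i : Fin m := ⟨(p : ℕ), hp⟩ with hi
      have hpi : p = i.castSucc := Fin.ext rfl
      have hqi : q = i.succ := Fin.ext (by simp [hi, hq1])
      rcases lt_or_eq_of_le (hI i).2 with hlt | heq
      · -- lam i.succ < mu i.castSucc : first factor zero
        rw [hpi, hqi, hNrow]
        rw [if_pos (by rw [← hqi] at hlt ⊢; exact hlt)]
        · rw [zero_mul]
      · -- lam i.succ = mu i.castSucc : second factor zero
        have hsecond : N q p = 0 := by
          by_cases hq2 : (q : ℕ) < m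
          · set i' : Fin m := ⟨(q : ℕ), hq2⟩ with hi'
            have hqi' : q = i'.castSucc := Fin.ext rfl
            have hν' : ν i'.castSucc = mu i.castSucc := by
              rw [← hqi', hqi, hνs]
            have hmu' : mu i'.castSucc < mu i.castSucc := by
              apply hmu
              rw [Fin.lt_def]
              simp [hi', hi, hq1]
            have hlx : mu i.castSucc < lam p := by
              rw [hpi]
              calc mu i.castSucc = lam i.succ := heq.symm
                _ < lam i.castSucc := hlam (Fin.castSucc_lt_succ (i := i))
            rw [hqi', hNrow]
            rw [if_neg (by omega), if_neg (by omega), if_neg (by rw [hν']; omega),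
              if_neg (by rw [hν']; omega)]
          · have hlast : q = Fin.last m := by
              apply Fin.ext; simp only [Fin.val_last]
              have := q.isLt; omega
            have hν' : ν (Fin.last m) = mu i.castSucc := by
              rw [← hlast, hqi, hνs]
            have hlx : mu i.castSucc < lam p := by
              rw [hpi]
              calc mu i.castSucc = lam i.succ := heq.symm
                _ < lam i.castSucc := hlam (Fin.castSucc_lt_succ (i := i))
            rw [hlast, hNlast, hν']
            rw [if_pos (by rw [← hpi] at hlx ⊢; exact hlx)]
        rw [hsecond, mul_zero]
    -- hdiag
    have hdiag : ∀ p : Fin (m+1), N p p =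
        (if mu p = lam p then t else if ν p = lam p then 1 else (1+t)) * u ^ (ν p - lam p) := by
      intro p
      by_cases hp : (p : ℕ) < m
      · set i : Fin m := ⟨(p : ℕ), hp⟩ with hi
        have hpi : p = i.castSucc := Fin.ext rfl
        have hba : mu i.castSucc < ν i.castSucc := by
          have := hanti i.castSucc i.succ (by simp)
          rw [hνs] at this; exact this
        have hb : mu i.castSucc ≤ lam i.castSucc := (hI i).1
        have ha : lam i.castSucc ≤ ν i.castSucc := by rw [← hpi]; exact hlow p
        rw [hpi, hNrow]
        rcases eq_or_lt_of_le hb with heq | hlt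
        · rw [if_neg (by omega), if_pos heq.symm, if_pos heq]
        · rcases eq_or_lt_of_le ha with heq2 | hlt2
          · rw [if_neg (by omega), if_neg (by omega), if_neg (by omega), if_pos heq2,
              if_neg (by omega), if_pos heq2.symm, heq2, Nat.sub_self, pow_zero, mul_one]
          · rw [if_neg (by omega), if_neg (by omega), if_pos hlt2,
              if_neg (by omega), if_neg (by omega)]
      · have hlast : p = Fin.last m := by
          apply Fin.ext; simp only [Fin.val_last]
          have := p.isLt; omega
        have hmup : mu p ≠ lam p := by
          rw [hlast, hmu0]
          have := hlam1 (Fin.last m); omega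
        have ha : lam p ≤ ν p := hlow p
        rw [hlast, hNlast, ← hlast]
        rcases eq_or_lt_of_le ha with heq | hlt
        · rw [if_neg (by omega), if_pos heq.symm, if_neg hmup, if_pos heq.symm,
            heq, Nat.sub_self, pow_zero, mul_one]
        · rw [if_neg (by omega), if_neg (by omega), if_neg hmup, if_neg (by omega)]
    -- determinant computation
    have hdet : M.det = ∏ p, ((if mu p = lam p then t else if ν p = lam p then 1 else (1+t))
        * u ^ (ν p - lam p)) := by
      rw [← hdetN, my_det_tridiag N hfar hswap]
      exact Finset.prod_congr rfl (fun p _ => hdiag p)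
    rw [hdet, Finset.prod_mul_distrib, Finset.prod_pow_eq_pow_sum]
    -- exponent of u
    have hsum : (∑ p, (ν p - lam p)) = (k + ∑ i, mu i) - (∑ i, lam i) := by
      have h1 : (∑ p, (ν p - lam p)) + (∑ p, lam p) = ∑ p, ν p := by
        rw [← Finset.sum_add_distrib]
        exact Finset.sum_congr rfl (fun p _ => by have := hlow p; omega)
      have h2 : (∑ p, ν p) = k + ∑ i, mu i := by
        rw [Fin.sum_univ_succ, hν0]
        congr 1
        rw [Fin.sum_univ_castSucc (f := mu), hmu0, add_zero]
        exact Finset.sum_congr rfl (fun i _ => hνs i)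
      have h3 : (∑ p, lam p) ≤ ∑ p, ν p :=
        Finset.sum_le_sum (fun p _ => hlow p)
      omega
    rw [hsum]
    -- the coefficient product
    have hdisj : ∀ p : Fin (m+1), ν p = lam p → ¬ (mu p = lam p) := by
      intro p hp hc
      rcases Fin.eq_zero_or_eq_succ p with rfl | ⟨i, rfl⟩
      · rw [hν0] at hp; omega
      · rw [hνs] at hp
        have : mu i.succ < mu i.castSucc := hmu (Fin.castSucc_lt_succ (i := i))
        omega
    rw [Finset.prod_ite (fun _ => t) (fun p => if ν p = lam p then 1 else (1+t)),
      Finset.prod_const, Finset.prod_ite (fun _ => (1:R)) (fun _ => (1+t)),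
      Finset.prod_const_one, one_mul, Finset.prod_const]
    -- card computations
    have hcardA : (Finset.univ.filter (fun p : Fin (m+1) => mu p = lam p)).card =
        (Finset.univ.filter (fun i : Fin m => mu i.castSucc = lam i.castSucc)).card := by
      rw [Finset.card_filter, Finset.card_filter, Fin.sum_univ_castSucc]
      have : ¬ (mu (Fin.last m) = lam (Fin.last m)) := by
        rw [hmu0]; have := hlam1 (Fin.last m); omega
      rw [if_neg this, add_zero]
    have hcardB : ((Finset.univ.filter (fun p : Fin (m+1) => ¬ mu p = lam p)).filter
        (fun p => ν p = lam p)).card =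
        (Finset.univ.filter (fun i : Fin m => mu i.castSucc = lam i.succ)).card := by
      rw [Finset.filter_filter, Finset.card_filter, Finset.card_filter, Fin.sum_univ_succ]
      have h0 : ¬ (¬ mu (0 : Fin (m+1)) = lam 0 ∧ ν 0 = lam 0) := by
        rintro ⟨_, h⟩; rw [hν0] at h; omega
      rw [if_neg h0, zero_add]
      apply Finset.sum_congr rfl
      intro i _
      have : (¬ mu i.succ = lam i.succ ∧ ν i.succ = lam i.succ) ↔
          (mu i.castSucc = lam i.succ) := by
        rw [hνs]
        constructor
        · rintro ⟨_, h⟩; exact h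
        · intro h
          refine ⟨?_, h⟩
          have : mu i.succ < mu i.castSucc := hmu (Fin.castSucc_lt_succ (i := i))
          omega
      simp only [this]
    have hcardC : ((Finset.univ.filter (fun p : Fin (m+1) => ¬ mu p = lam p)).filter
        (fun p => ¬ ν p = lam p)).card
        = (m+1) - (Finset.univ.filter (fun i : Fin m => mu i.castSucc = lam i.castSucc)).card
          - (Finset.univ.filter (fun i : Fin m => mu i.castSucc = lam i.succ)).card := by
      have hsplit := Finset.card_filter_add_card_filter_not
        (s := Finset.univ.filter (fun p : Fin (m+1) => ¬ mu p = lam p))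
        (p := fun p => ν p = lam p)
      have hsplit2 := Finset.card_filter_add_card_filter_not
        (s := (Finset.univ : Finset (Fin (m+1))))
        (p := fun p : Fin (m+1) => mu p = lam p)
      simp only [Finset.card_univ, Fintype.card_fin] at hsplit2
      rw [hcardB] at hsplit
      omega
    simp only [hcardA, hcardB, hcardC]
    -- final arithmetic on exponents
    have hls : (Finset.univ.filter (fun i : Fin m => mu i.castSucc = lam i.castSucc)).card
        + (Finset.univ.filter (fun i : Fin m => mu i.castSucc < lam i.castSucc)).card = m := by
      have := Finset.card_filter_add_card_filter_not
        (s := (Finset.univ : Finset (Fin m)))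
        (p := fun i : Fin m => mu i.castSucc = lam i.castSucc)
      simp only [Finset.card_univ, Fintype.card_fin] at this
      have heq : Finset.univ.filter (fun i : Fin m => ¬ mu i.castSucc = lam i.castSucc)
          = Finset.univ.filter (fun i : Fin m => mu i.castSucc < lam i.castSucc) := by
        apply Finset.filter_congr
        intro i _
        have := (hI i).1
        constructor
        · intro h; omega
        · intro h; omega
      rw [heq] at this
      omega
    have hrs : (Finset.univ.filter (fun i : Fin m => mu i.castSucc = lam i.succ)).card
        ≤ (Finset.univ.filter (fun i : Fin m => mu i.castSucc < lam i.castSucc)).card := by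
      apply Finset.card_le_card
      intro i hi
      simp only [Finset.mem_filter, Finset.mem_univ, true_and] at hi ⊢
      rw [hi]
      exact hlam (Fin.castSucc_lt_succ (i := i))
    have hexp : (m+1) - (Finset.univ.filter
          (fun i : Fin m => mu i.castSucc = lam i.castSucc)).card
        - (Finset.univ.filter (fun i : Fin m => mu i.castSucc = lam i.succ)).card
        = (Finset.univ.filter (fun i : Fin m => mu i.castSucc < lam i.castSucc)).card
          - (Finset.univ.filter (fun i : Fin m => mu i.castSucc = lam i.succ)).card + 1 := by
      omega
    rw [hexp]
  · -- non-interleaving case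
    intro hni
    push_neg at hni
    obtain ⟨i, hi⟩ := hni
    by_cases hA : mu i.castSucc ≤ lam i.castSucc
    · -- then lam i.succ > mu i.castSucc : zero block in M itself
      have hB : mu i.castSucc < lam i.succ := by
        have := hi hA; omega
      apply my_det_zero_block M (fun p => (i : ℕ) + 1 ≤ (p : ℕ)) (fun q => (q : ℕ) ≤ (i : ℕ) + 1)
      · intro p q hp hq
        rw [hMval]
        apply hneg
        have h1 : ν p ≤ mu i.castSucc := by
          have := hanti_le i.succ p (by simp only [Fin.val_succ]; omega)
          rw [hνs] at this; exact this
        have h2 : lam i.succ ≤ lam q := hlam.antitone (by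
          rw [Fin.le_def]; simp only [Fin.val_succ]; omega)
        have := hB
        omega
      · rw [my_card_ge, my_card_le]
        have := i.isLt
        omega
    · -- mu i.castSucc > lam i.castSucc : row reduce then zero block
      have hA' : lam i.castSucc < mu i.castSucc := by omega
      set F : Matrix (Fin (m+1)) (Fin (m+1)) R :=
        Matrix.of (fun p q : Fin (m+1) =>
          if (p : ℕ) ≤ (i : ℕ) ∧ (q : ℕ) = (i : ℕ) + 1
          then -(u ^ (ν p - mu i.castSucc)) else 0) with hF
      have hFval : ∀ p q, F p q =
          if (p : ℕ) ≤ (i : ℕ) ∧ (q : ℕ) = (i : ℕ) + 1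
          then -(u ^ (ν p - mu i.castSucc)) else 0 := fun p q => rfl
      set E : Matrix (Fin (m+1)) (Fin (m+1)) R := 1 + F with hE
      have hEtri : E.BlockTriangular id := by
        intro a b hab
        have hab' : b < a := hab
        have h1 : (1 : Matrix (Fin (m+1)) (Fin (m+1)) R) a b = 0 :=
          Matrix.one_apply_ne (Fin.ne_of_gt hab')
        have h2 : F a b = 0 := by
          rw [hFval]
          have : ¬ ((a : ℕ) ≤ (i : ℕ) ∧ (b : ℕ) = (i : ℕ) + 1) := by
            rintro ⟨ha, hb⟩
            have : (b : ℕ) < (a : ℕ) := hab'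
            omega
          simp [this]
        rw [hE, Matrix.add_apply, h1, h2, add_zero]
      have hEdet : E.det = 1 := by
        rw [Matrix.det_of_upperTriangular hEtri]
        apply Finset.prod_eq_one
        intro p _
        have h2 : F p p = 0 := by
          rw [hFval]
          have : ¬ ((p : ℕ) ≤ (i : ℕ) ∧ (p : ℕ) = (i : ℕ) + 1) := by omega
          simp [this]
        rw [hE, Matrix.add_apply, h2, add_zero, Matrix.one_apply_eq]
      have hdetEM : (E * M).det = M.det := by
        rw [Matrix.det_mul, hEdet, one_mul]
      rw [← hdetEM]
      apply my_det_zero_block (E * M) (fun p => (p : ℕ) ≤ (i : ℕ)) (fun q => (i : ℕ) ≤ (q : ℕ))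
      · intro p q hp hq
        have hNval : (E * M) p q = M p q + (F * M) p q := by
          rw [hE, Matrix.add_mul, Matrix.one_mul, Matrix.add_apply]
        have hFM : (F * M) p q = -(u ^ (ν p - mu i.castSucc)) * M i.succ q := by
          rw [Matrix.mul_apply]
          have hterm : ∀ r : Fin (m+1), F p r * M r q =
              if r = i.succ then -(u ^ (ν p - mu i.castSucc)) * M r q else 0 := by
            intro r
            by_cases hr : r = i.succ
            · subst hr
              rw [hFval, if_pos, if_pos rfl]
              exact ⟨hp, by simp⟩
            · rw [hFval, if_neg, if_neg hr, zero_mul]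
              rintro ⟨_, h2⟩
              exact hr (Fin.ext (by simpa using h2))
          rw [Finset.sum_congr rfl (fun r _ => hterm r), Finset.sum_ite_eq' Finset.univ i.succ
            (fun r => -(u ^ (ν p - mu i.castSucc)) * M r q)]
          simp
        -- entries in the block are (1+t) u^(ν p - lam q) style
        have hν1 : mu i.castSucc ≤ ν p := by
          have := hanti_le p i.succ (by simp only [Fin.val_succ]; omega)
          rw [hνs] at this; exact this
        have hν2 : ν i.succ = mu i.castSucc := hνs i
        have hl1 : lam q ≤ lam i.castSucc := hlam.antitone (by
          rw [Fin.le_def]; simp only [Fin.coe_castSucc]; omega)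
        have hl2 : lam q < mu i.castSucc := by omega
        have hMpq : M p q = (1+t) * u ^ (ν p - lam q) := by
          rw [hMval, cval, if_neg (by omega), if_neg (by omega)]
        have hMsq : M i.succ q = (1+t) * u ^ (mu i.castSucc - lam q) := by
          rw [hMval, cval, hν2, if_neg (by omega), if_neg (by omega)]
        rw [hNval, hFM, hMpq, hMsq]
        have he : (ν p - mu i.castSucc) + (mu i.castSucc - lam q) = ν p - lam q := by omega
        rw [← he, pow_add]
        ring
      · rw [my_card_le, my_card_ge]
        have := i.isLt
        omega
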